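/- Let n ≥ 1 and let X be a continuum which is (n+1)-cc. Then for every finite set S ⊆ X with 1 ≤ |S| ≤ n, the complement X \ S has at most |S| connected components. -/

import Mathlib

open Set Topology

/-- An arc in a topological space: a subspace homeomorphic to the closed unit interval. -/
def IsArc {X : Type*} [TopologicalSpace X] (A : Set X) : Prop :=
  Nonempty (Set.Icc (0:ℝ) 1 ≃ₜ A)

/-- A simple closed curve: a subspace homeomorphic to the unit circle. -/
def IsSimpleClosedCurve {X : Type*} [TopologicalSpace X] (A : Set X) : Prop :=
  Nonempty (Circle ≃ₜ A)

/-- `X` is `n`-ac: every set of at most `n` points lies on an arc. -/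
def NArcConnected (X : Type*) [TopologicalSpace X] (n : ℕ) : Prop :=
  ∀ S : Finset X, S.card ≤ n → ∃ A : Set X, IsArc A ∧ ↑S ⊆ A

/-- `X` is `n`-cc: every set of at most `n` points lies on a simple closed curve. -/
def NCircleConnected (X : Type*) [TopologicalSpace X] (n : ℕ) : Prop :=
  ∀ S : Finset X, S.card ≤ n → ∃ A : Set X, IsSimpleClosedCurve A ∧ ↑S ⊆ A

/-- `A` is an arc with endpoints `x` and `y`. -/
def IsArcWithEndpoints {X : Type*} [TopologicalSpace X] (A : Set X) (x y : X) : Prop :=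
  ∃ e : Set.Icc (0:ℝ) 1 ≃ₜ A,
    (e ⟨0, Set.left_mem_Icc.mpr zero_le_one⟩ : X) = x ∧
    (e ⟨1, Set.right_mem_Icc.mpr zero_le_one⟩ : X) = y

/-- `X` is 3-sac: for any three points there is an arc from the first to the third
through the second. -/
def ThreeSAC (X : Type*) [TopologicalSpace X] : Prop :=
  ∀ x₁ x₂ x₃ : X, ∃ A : Set X, IsArcWithEndpoints A x₁ x₃ ∧ x₂ ∈ A

/-- `X` is a continuum: nonempty (via connectedness), compact, connected, metrizable. -/
def IsContinuum (X : Type*) [TopologicalSpace X] : Prop :=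
  CompactSpace X ∧ ConnectedSpace X ∧ TopologicalSpace.MetrizableSpace X

/-- Every nondegenerate subcontinuum has nonempty interior. -/
def CompletelyRegular (X : Type*) [TopologicalSpace X] : Prop :=
  ∀ K : Set X, IsCompact K → IsConnected K → K.Nontrivial → (interior K).Nonempty


lemma exists_emb_of_not_card_le {α : Type*} (k : ℕ) (h : ¬ (ENat.card α ≤ (k : ℕ∞))) :
    ∃ f : Fin (k+1) → α, Function.Injective f := by
  by_cases hinf : Infinite α
  · obtain f := Infinite.natEmbedding α
    exact ⟨fun i => f i.val, f.injective.comp Fin.val_injective⟩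
  · have : Finite α := finite_or_infinite α |>.resolve_right hinf
    have := Fintype.ofFinite α
    rw [ENat.card_eq_coe_fintype_card, Nat.cast_le] at h
    have h2 : Fintype.card (Fin (k+1)) ≤ Fintype.card α := by
      rw [Fintype.card_fin]; omega
    obtain ⟨f⟩ := Function.Embedding.nonempty_of_card_le h2
    exact ⟨f, f.injective⟩

lemma circle_exp_injOn {a x y : ℝ} (hx : x ∈ Set.Ioc a (a + 2*Real.pi))
    (hy : y ∈ Set.Ioc a (a + 2*Real.pi)) (hxy : Circle.exp x = Circle.exp y) : x = y := by
  obtain ⟨m, hm⟩ := Circle.exp_eq_exp.mp hxy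
  have hπ := Real.pi_pos
  have h1 : (m : ℝ) < 1 := by nlinarith [hx.1, hx.2, hy.1, hy.2]
  have h2 : (-1 : ℝ) < m := by nlinarith [hx.1, hx.2, hy.1, hy.2]
  have h3 : m < 1 := by exact_mod_cast h1
  have h4 : -1 < m := by exact_mod_cast h2
  have h5 : m = 0 := by omega
  rw [h5] at hm
  simpa using hm

lemma circle_exp_param (a : ℝ) (w : Circle) :
    Circle.exp (toIocMod Real.two_pi_pos a (Complex.arg w)) = w := by
  have h := self_sub_toIocMod Real.two_pi_pos a (Complex.arg w)
  rw [zsmul_eq_mul] at h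
  have : Circle.exp (toIocMod Real.two_pi_pos a (Complex.arg w))
      = Circle.exp (Complex.arg w) :=
    Circle.exp_eq_exp.mpr ⟨-(toIocDiv Real.two_pi_pos a (Complex.arg w)), by push_cast; linarith⟩
  rw [this]
  exact Circle.exp_arg w

lemma comp_eq_of_preconnected {X : Type*} [TopologicalSpace X] {S : Set X}
    {P : Set X} (hP : IsPreconnected P) (hPS : ∀ x ∈ P, x ∈ Sᶜ)
    (u v : ↥(Sᶜ)) (hu : (u:X) ∈ P) (hv : (v:X) ∈ P) :
    (ConnectedComponents.mk u) = ConnectedComponents.mk v := by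
  set P' : Set ↥(Sᶜ) := Subtype.val ⁻¹' P with hP'def
  have him : Subtype.val '' P' = P := by
    rw [hP'def, Set.image_preimage_eq_inter_range, Subtype.range_val]
    exact Set.inter_eq_left.mpr (fun x hx => hPS x hx)
  have hP' : IsPreconnected P' :=
    (Topology.IsInducing.subtypeVal.isPreconnected_image).mp (him ▸ hP)
  have husub : P' ⊆ connectedComponent u := hP'.subset_connectedComponent hu
  exact (ConnectedComponents.coe_eq_coe'.mpr (husub hv)).symm

theorem stmt_10 {X : Type*} [TopologicalSpace X] [CompactSpace X] [ConnectedSpace X]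
    [TopologicalSpace.MetrizableSpace X] (n : ℕ) (hn : 1 ≤ n)
    (h : NCircleConnected X (n + 1)) (S : Finset X) (hS1 : 1 ≤ S.card) (hS2 : S.card ≤ n) :
    ENat.card (ConnectedComponents ↥((↑S : Set X)ᶜ)) ≤ (S.card : ℕ∞) := by
  classical
  by_contra hcon
  set m := S.card with hm
  obtain ⟨f, hf⟩ := exists_emb_of_not_card_le m hcon
  choose y hy using fun i => ConnectedComponents.surjective_coe (f i)
  have hyinj : Function.Injective y := fun i j hij => hf (by rw [← hy i, ← hy j, hij])
  set T : Finset X := Finset.image (fun i => (y i : X)) Finset.univ with hTdef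
  have hTcard : T.card ≤ n + 1 := by
    have h1 : T.card ≤ m + 1 := le_trans Finset.card_image_le (by simp)
    exact le_trans h1 (Nat.add_le_add_right hS2 1)
  obtain ⟨A, ⟨e⟩, hTA⟩ := h T hTcard
  have hyA : ∀ i, (y i : X) ∈ A := fun i =>
    hTA (Finset.mem_coe.mpr (Finset.mem_image_of_mem _ (Finset.mem_univ i)))
  set z : Fin (m+1) → Circle := fun i => e.symm ⟨(y i : X), hyA i⟩ with hzdef
  have hez : ∀ i, (↑(e (z i)) : X) = (y i : X) := fun i => by
    simp only [hzdef, Homeomorph.apply_symm_apply]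
  have hzinj : Function.Injective z := by
    intro i j hij
    apply hyinj
    apply Subtype.ext
    have := congrArg (fun c => (↑(e c) : X)) hij
    simpa only [hez] using this
  have hinj : Function.Injective (fun c : Circle => (↑(e c) : X)) :=
    Subtype.val_injective.comp e.injective
  set Fs : Set Circle := (fun c : Circle => (↑(e c) : X)) ⁻¹' ↑S with hFsdef
  have hFsfin : Fs.Finite := Set.Finite.preimage hinj.injOn S.finite_toSet
  have hzFs : ∀ i, z i ∉ Fs := by
    intro i hi
    rw [hFsdef, Set.mem_preimage, hez i] at hi
    exact (y i).2 hi
  -- key claim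
  have key : ∃ i j : Fin (m+1), i ≠ j ∧ ∃ P : Set X, IsPreconnected P ∧
      (∀ x ∈ P, x ∉ (↑S : Set X)) ∧ (y i : X) ∈ P ∧ (y j : X) ∈ P := by
    rcases Set.eq_empty_or_nonempty Fs with hFe | ⟨s₀, hs₀⟩
    · refine ⟨⟨0, by omega⟩, ⟨1, by omega⟩,
        fun hc => by simpa using congrArg Fin.val hc, A, ?_, ?_, hyA _, hyA _⟩
      · have hsurj : Function.Surjective (⇑e ∘ Circle.exp) :=
          e.surjective.comp (fun w => ⟨Complex.arg w, Circle.exp_arg w⟩)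
        have hrA : Set.range ((Subtype.val : A → X) ∘ (⇑e ∘ Circle.exp)) = A := by
          rw [Set.range_comp, hsurj.range_eq, Subtype.coe_image_univ]
        rw [← hrA]
        exact isPreconnected_range
          ((continuous_subtype_val.comp e.continuous).comp Circle.exp.continuous)
      · intro x hx hxS
        have : e.symm ⟨x, hx⟩ ∈ Fs := by
          rw [hFsdef, Set.mem_preimage]
          simpa only [Homeomorph.apply_symm_apply] using hxS
        rw [hFe] at this
        exact this
    · set a := Complex.arg (s₀ : ℂ) with hadef
      have hea : Circle.exp a = s₀ := Circle.exp_arg s₀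
      set p : Circle → ℝ := fun w => toIocMod Real.two_pi_pos a (Complex.arg w) with hpdef
      have hp1 : ∀ w, Circle.exp (p w) = w := circle_exp_param a
      have hp2 : ∀ w, p w ∈ Set.Ioc a (a + 2*Real.pi) := fun w => toIocMod_mem_Ioc _ _ _
      have hpinj : Function.Injective p := fun w1 w2 h12 => by
        rw [← hp1 w1, ← hp1 w2, h12]
      have hps₀ : p s₀ = a + 2*Real.pi := by
        refine circle_exp_injOn (hp2 s₀) ⟨by linarith [Real.two_pi_pos], le_refl _⟩ ?_
        rw [hp1, Circle.exp_add_two_pi, hea]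
      set Ff : Finset Circle := hFsfin.toFinset with hFfdef
      have hs₀F : s₀ ∈ Ff := hFsfin.mem_toFinset.mpr hs₀
      have hFcard : Ff.card ≤ m := by
        refine Finset.card_le_card_of_injOn (fun c => (↑(e c) : X)) ?_ hinj.injOn
        intro c hc
        exact hFsfin.mem_toFinset.mp hc
      set t : Fin (m+1) → ℝ := fun i => p (z i) with htdef
      set g : Fin (m+1) → ℕ :=
        fun i => ((Ff.erase s₀).filter (fun u => p u < t i)).card with hgdef
      have hkey : ∀ i j : Fin (m+1), i ≠ j → g i = g j → t i < t j →
          ∃ i j : Fin (m+1), i ≠ j ∧ ∃ P : Set X, IsPreconnected P ∧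
            (∀ x ∈ P, x ∉ (↑S : Set X)) ∧ (y i : X) ∈ P ∧ (y j : X) ∈ P := by
        intro i j hij hgij hlt
        refine ⟨i, j, hij,
          (fun c : Circle => (↑(e c) : X)) '' (Circle.exp '' Set.Icc (t i) (t j)), ?_, ?_, ?_, ?_⟩
        · exact ((isPreconnected_Icc.image _ Circle.exp.continuous.continuousOn).image _
            ((continuous_subtype_val.comp e.continuous).continuousOn))
        · rintro x ⟨w, ⟨τ, hτ, rfl⟩, rfl⟩ hxS
          have hwFs : Circle.exp τ ∈ Fs := hxS
          have hτIoc : τ ∈ Set.Ioc a (a + 2*Real.pi) :=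
            ⟨lt_of_lt_of_le (hp2 (z i)).1 hτ.1, le_trans hτ.2 (hp2 (z j)).2⟩
          have hpτ : p (Circle.exp τ) = τ := circle_exp_injOn (hp2 _) hτIoc (hp1 _)
          by_cases hw : Circle.exp τ = s₀
          · rw [hw] at hpτ
            have hτval : τ = a + 2*Real.pi := by rw [← hpτ, hps₀]
            have htj : t j = a + 2*Real.pi := le_antisymm (hp2 (z j)).2 (hτval ▸ hτ.2)
            have : z j = s₀ := by
              rw [← hp1 (z j)]
              show Circle.exp (t j) = s₀
              rw [htj, Circle.exp_add_two_pi, hea]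
            exact hzFs j (this ▸ hs₀)
          · have hwF : Circle.exp τ ∈ Ff.erase s₀ :=
              Finset.mem_erase.mpr ⟨hw, hFsfin.mem_toFinset.mpr hwFs⟩
            have hτi : t i < τ := by
              refine lt_of_le_of_ne hτ.1 (fun h' => hzFs i ?_)
              have : z i = Circle.exp τ := by rw [← hp1 (z i)]; show Circle.exp (t i) = _; rw [h']
              exact this ▸ hwFs
            have hτj : τ < t j := by
              refine lt_of_le_of_ne hτ.2 (fun h' => hzFs j ?_)
              have : z j = Circle.exp τ := by rw [← hp1 (z j)]; show Circle.exp (t j) = _; rw [← h']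
              exact this ▸ hwFs
            have hsub : (Ff.erase s₀).filter (fun u => p u < t i) ⊂
                (Ff.erase s₀).filter (fun u => p u < t j) := by
              constructor
              · exact Finset.monotone_filter_right _ (fun u _ hu => lt_trans hu hlt)
              · intro hcontra
                have h1 : Circle.exp τ ∈ (Ff.erase s₀).filter (fun u => p u < t j) :=
                  Finset.mem_filter.mpr ⟨hwF, by rw [hpτ]; exact hτj⟩
                have h2 := hcontra h1
                rw [Finset.mem_filter, hpτ] at h2
                exact absurd h2.2 (not_lt.mpr (le_of_lt hτi))
            exact absurd hgij (ne_of_lt (Finset.card_lt_card hsub))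
        · exact ⟨z i, ⟨t i, Set.left_mem_Icc.mpr (le_of_lt hlt), hp1 (z i)⟩, hez i⟩
        · exact ⟨z j, ⟨t j, Set.right_mem_Icc.mpr (le_of_lt hlt), hp1 (z j)⟩, hez j⟩
      -- pigeonhole
      have hmaps : ∀ i ∈ (Finset.univ : Finset (Fin (m+1))), g i ∈ Finset.range m := by
        intro i _
        rw [Finset.mem_range]
        show ((Ff.erase s₀).filter (fun u => p u < t i)).card < m
        have h1 : ((Ff.erase s₀).filter (fun u => p u < t i)).card ≤ (Ff.erase s₀).card :=
          Finset.card_filter_le _ _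
        have h2 : (Ff.erase s₀).card = Ff.card - 1 := Finset.card_erase_of_mem hs₀F
        have h3 : 1 ≤ Ff.card := Finset.card_pos.mpr ⟨s₀, hs₀F⟩
        omega
      have hlt' : (Finset.range m).card < (Finset.univ : Finset (Fin (m+1))).card := by
        simp only [Finset.card_range, Finset.card_univ, Fintype.card_fin]
        omega
      obtain ⟨i, _, j, _, hij, hgij⟩ :=
        Finset.exists_ne_map_eq_of_card_lt_of_maps_to hlt' hmaps
      have htne : t i ≠ t j := fun h' => hij (hzinj (hpinj h'))
      rcases lt_or_gt_of_ne htne with hord | hord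
      · exact hkey i j hij hgij hord
      · exact hkey j i (Ne.symm hij) hgij.symm hord
  obtain ⟨i, j, hij, P, hP, hPS, hPi, hPj⟩ := key
  have : ConnectedComponents.mk (y i) = ConnectedComponents.mk (y j) :=
    comp_eq_of_preconnected hP hPS (y i) (y j) hPi hPj
  exact hij (hf (by rw [← hy i, ← hy j, this]))
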